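/- arXiv:2605.10884 — 2 statements merged into one kernel-verified Lean document; each statement's English description precedes it below -/
import Mathlib

section
/- For every integer k ≥ 0, every x ∈ ℝ and every σ > 0, the Hermite polynomial with variance parameter satisfies |H_k(x, σ²)| ≤ 2^{k-1} (|x|^k + (√k · σ)^k), where H_k(x, σ²) = k! ∑_{m=0}^{⌊k/2⌋} ((-1)^m σ^{2m} / (m!(k-2m)!)) x^{k-2m}. (For k = 0 interpret the right-hand side as ≥ 1.) -/
/-- The `k`-th Hermite polynomial with variance parameter `v = σ²`. -/
noncomputable def hermiteVar (k : ℕ) (x v : ℝ) : ℝ :=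
  (Nat.factorial k : ℝ) * ∑ m ∈ Finset.range (k / 2 + 1),
    ((-1 : ℝ) ^ m * v ^ m / ((Nat.factorial m : ℝ) * (Nat.factorial (k - 2 * m) : ℝ))) *
      x ^ (k - 2 * m)

lemma two_mul_factorial_le (m k : ℕ) (h : 2 * m ≤ k) :
    (2 * m).factorial ≤ k ^ m * m.factorial := by
  have h1 : m.factorial * (m + 1).ascFactorial m = (m + m).factorial :=
    Nat.factorial_mul_ascFactorial m m
  have h2 : (m + 1).ascFactorial m ≤ (m + m) ^ m := Nat.ascFactorial_le_pow_add m m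
  have h3 : (m + m) ^ m ≤ k ^ m := Nat.pow_le_pow_left (by omega) m
  calc (2 * m).factorial = m.factorial * (m + 1).ascFactorial m := by
        rw [h1, two_mul]
    _ ≤ m.factorial * (k ^ m) := Nat.mul_le_mul_left _ (h2.trans h3)
    _ = k ^ m * m.factorial := Nat.mul_comm _ _

lemma factorial_le_choose_mul (m k : ℕ) (h : 2 * m ≤ k) :
    k.factorial ≤ k.choose (2 * m) * (k ^ m * m.factorial) * (k - 2 * m).factorial := by
  have := Nat.choose_mul_factorial_mul_factorial h
  calc k.factorial = k.choose (2 * m) * (2 * m).factorial * (k - 2 * m).factorial := this.symm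
    _ ≤ k.choose (2 * m) * (k ^ m * m.factorial) * (k - 2 * m).factorial := by
        exact Nat.mul_le_mul_right _ (Nat.mul_le_mul_left _ (two_mul_factorial_le m k h))

/-- For every `k ≥ 0`, `x ∈ ℝ` and `σ > 0`,
`|H_k(x, σ²)| ≤ 2^{k-1} (|x|^k + (√k σ)^k)`, where for `k = 0` the prefactor `2^{k-1}` is
interpreted via the integer power `2^{(k : ℤ) - 1} = 1/2`, making the right-hand side `1`. -/
theorem hermiteVar_abs_le (k : ℕ) (x σ : ℝ) (hσ : 0 < σ) :
    |hermiteVar k x (σ ^ 2)| ≤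
      (2 : ℝ) ^ ((k : ℤ) - 1) * (|x| ^ k + (Real.sqrt k * σ) ^ k) := by
  rcases Nat.eq_zero_or_pos k with hk | hk
  · subst hk
    simp [hermiteVar]
    norm_num
  set b := Real.sqrt k * σ with hbdef
  have hbnn : (0 : ℝ) ≤ b := mul_nonneg (Real.sqrt_nonneg _) hσ.le
  have hb2 : b ^ 2 = (k : ℝ) * σ ^ 2 := by
    rw [hbdef, mul_pow, Real.sq_sqrt (by positivity)]
  -- step 1 : bound the absolute value termwise
  have step1 : |hermiteVar k x (σ ^ 2)| ≤
      ∑ m ∈ Finset.range (k / 2 + 1),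
        |x| ^ (k - 2 * m) * b ^ (2 * m) * (k.choose (2 * m) : ℝ) := by
    rw [hermiteVar, Finset.mul_sum]
    refine (Finset.abs_sum_le_sum_abs _ _).trans (Finset.sum_le_sum ?_)
    intro m hm
    have h2m : 2 * m ≤ k := by
      have := Finset.mem_range.mp hm
      have := Nat.div_mul_le_self k 2
      omega
    have habs : |(k.factorial : ℝ) * (((-1 : ℝ) ^ m * (σ ^ 2) ^ m /
        ((m.factorial : ℝ) * ((k - 2 * m).factorial : ℝ))) * x ^ (k - 2 * m))| =
        (k.factorial : ℝ) * ((σ ^ 2) ^ m /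
          ((m.factorial : ℝ) * ((k - 2 * m).factorial : ℝ))) * |x| ^ (k - 2 * m) := by
      rw [abs_mul, abs_mul, abs_div, abs_mul, abs_mul, abs_pow, abs_pow, abs_pow]
      simp [Nat.abs_cast, abs_of_nonneg (sq_nonneg σ), mul_assoc]
    rw [habs]
    have hfac : (k.factorial : ℝ) / ((m.factorial : ℝ) * ((k - 2 * m).factorial : ℝ)) ≤
        (k.choose (2 * m) : ℝ) * (k : ℝ) ^ m := by
      rw [div_le_iff₀ (by positivity)]
      have := factorial_le_choose_mul m k h2m
      have hcast : (k.factorial : ℝ) ≤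
          (k.choose (2 * m) : ℝ) * ((k : ℝ) ^ m * (m.factorial : ℝ)) *
            ((k - 2 * m).factorial : ℝ) := by exact_mod_cast this
      calc (k.factorial : ℝ) ≤ _ := hcast
        _ = (k.choose (2 * m) : ℝ) * (k : ℝ) ^ m *
              ((m.factorial : ℝ) * ((k - 2 * m).factorial : ℝ)) := by ring
    have hbm : (k : ℝ) ^ m * (σ ^ 2) ^ m = b ^ (2 * m) := by
      rw [pow_mul, hb2, mul_pow]
    calc (k.factorial : ℝ) * ((σ ^ 2) ^ m /
          ((m.factorial : ℝ) * ((k - 2 * m).factorial : ℝ))) * |x| ^ (k - 2 * m)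
        = (k.factorial : ℝ) / ((m.factorial : ℝ) * ((k - 2 * m).factorial : ℝ)) *
            ((σ ^ 2) ^ m * |x| ^ (k - 2 * m)) := by ring
      _ ≤ (k.choose (2 * m) : ℝ) * (k : ℝ) ^ m * ((σ ^ 2) ^ m * |x| ^ (k - 2 * m)) :=
          mul_le_mul_of_nonneg_right hfac (by positivity)
      _ = |x| ^ (k - 2 * m) * b ^ (2 * m) * (k.choose (2 * m) : ℝ) := by
          rw [← hbm]; ring
  -- step 2 : compare with the full binomial sum
  have step2 : ∑ m ∈ Finset.range (k / 2 + 1),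
      |x| ^ (k - 2 * m) * b ^ (2 * m) * (k.choose (2 * m) : ℝ) ≤
      ∑ j ∈ Finset.range (k + 1), |x| ^ (k - j) * b ^ j * (k.choose j : ℝ) := by
    have himg : ∑ m ∈ Finset.range (k / 2 + 1),
        |x| ^ (k - 2 * m) * b ^ (2 * m) * (k.choose (2 * m) : ℝ) =
        ∑ j ∈ (Finset.range (k / 2 + 1)).image (fun m => 2 * m),
          |x| ^ (k - j) * b ^ j * (k.choose j : ℝ) := by
      rw [Finset.sum_image (by intro a _ b _ h; dsimp only at h; omega)]
    rw [himg]
    refine Finset.sum_le_sum_of_subset_of_nonneg ?_ ?_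
    · intro j hj
      simp only [Finset.mem_image, Finset.mem_range] at hj ⊢
      obtain ⟨m, hm, rfl⟩ := hj
      have := Nat.div_mul_le_self k 2
      omega
    · intro j _ _
      positivity
  -- step 3 : binomial theorem and `add_pow_le`
  have step3 : ∑ j ∈ Finset.range (k + 1), |x| ^ (k - j) * b ^ j * (k.choose j : ℝ) =
      (b + |x|) ^ k := by
    rw [add_pow]
    exact Finset.sum_congr rfl fun j _ => by ring
  have step4 : (|x| + b) ^ k ≤ 2 ^ (k - 1) * (|x| ^ k + b ^ k) :=
    add_pow_le (abs_nonneg x) hbnn k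
  have hzpow : (2 : ℝ) ^ ((k : ℤ) - 1) = (2 : ℝ) ^ (k - 1) := by
    have : (k : ℤ) - 1 = ((k - 1 : ℕ) : ℤ) := by omega
    rw [this, zpow_natCast]
  rw [hzpow]
  calc |hermiteVar k x (σ ^ 2)| ≤ _ := step1
    _ ≤ _ := step2
    _ = (b + |x|) ^ k := step3
    _ = (|x| + b) ^ k := by rw [add_comm]
    _ ≤ _ := step4
end

section
/- (Ergodic averaging with product structure.) Let D ⊂ ℝ^d be bounded, let (Ω, F, P) carry an ergodic measure-preserving ℤ^d-action, let A ⊂ Ω be an event of probability θ₀ > 0, and set 1ⁿ(x)(ω) := 1_{⌊nx⌋·orbit ∈ A}. Assume the ergodic theorem in the form: for every bounded measurable h : D → ℝ, ∫_D h(x) 1ⁿ(x) dx → θ₀ ∫_D h(x) dx P-a.s. Let f₁,...,f_M, g₁,...,g_M ∈ C(D̄) and let 𝓗 : ℝ → ℝ be continuous. Then P-a.s., ∫_D 𝓗(∑_{i=1}^M g_i(y) ∫_D f_i(x) 1ⁿ(x) dx) f(y) 1ⁿ(y) dy → θ₀ ∫_D 𝓗(∑_{i=1}^M g_i(y) θ₀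 ∫_D f_i(x) dx) f(y) dy for every bounded measurable f. -/
open MeasureTheory

private lemma indicator_abs_le' {α : Type*} {s : Set α} {f : α → ℝ} {C : ℝ}
    (h : ∀ x ∈ s, |f x| ≤ C) (x : α) : |s.indicator f x| ≤ max C 0 := by
  by_cases hx : x ∈ s
  · rw [Set.indicator_of_mem hx]; exact le_max_of_le_left (h x hx)
  · rw [Set.indicator_of_notMem hx]; simp

private lemma cont_on_indicator_measurable {d : ℕ} {K : Set (EuclideanSpace ℝ (Fin d))}
    (hKcl : IsClosed K) {f : EuclideanSpace ℝ (Fin d) → ℝ} (hf : ContinuousOn f K) :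
    Measurable (K.indicator f) := by
  classical
  have h1 := hf.measurable_piecewise (g := fun _ => (0 : ℝ)) continuousOn_const
    hKcl.measurableSet
  have heq : K.piecewise f (fun _ => (0 : ℝ)) = K.indicator f := by
    funext x; by_cases hx : x ∈ K <;> simp [Set.piecewise, Set.indicator, hx]
  rwa [heq] at h1

/-- Ergodic averaging with product structure. Assume the ergodic theorem in the form: a.s.,
for every bounded measurable `h`, `∫_D h(x) 1ⁿ(x) dx → θ₀ ∫_D h(x) dx`. Then a.s., for all
`f₁,…,f_M, g₁,…,g_M ∈ C(D̄)`, continuous `𝓗`, and bounded measurable `φ`,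
`∫_D 𝓗(∑ᵢ gᵢ(y) ∫_D fᵢ(x) 1ⁿ(x) dx) φ(y) 1ⁿ(y) dy
  → θ₀ ∫_D 𝓗(∑ᵢ gᵢ(y) θ₀ ∫_D fᵢ(x) dx) φ(y) dy`. -/
theorem ergodic_averaging_product_structure (d : ℕ)
    (D : Set (EuclideanSpace ℝ (Fin d))) (hDb : Bornology.IsBounded D)
    (hDm : MeasurableSet D)
    {Ω : Type*} [MeasurableSpace Ω] (P : Measure Ω) [IsProbabilityMeasure P]
    (θ₀ : ℝ) (hθ₀ : 0 < θ₀)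
    (ind : ℕ → EuclideanSpace ℝ (Fin d) → Ω → ℝ)
    (hind01 : ∀ n x ωel, ind n x ωel = 0 ∨ ind n x ωel = 1)
    (hindm : ∀ n ωel, Measurable fun x => ind n x ωel)
    (hergodic : ∀ᵐ ωel ∂P, ∀ h : EuclideanSpace ℝ (Fin d) → ℝ,
      Measurable h → (∃ Ch : ℝ, ∀ x, |h x| ≤ Ch) →
      Filter.Tendsto (fun n => ∫ x in D, h x * ind n x ωel) Filter.atTop
        (nhds (θ₀ * ∫ x in D, h x)))
    (M : ℕ) (f g : Fin M → EuclideanSpace ℝ (Fin d) → ℝ)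
    (hf : ∀ i, ContinuousOn (f i) (closure D)) (hg : ∀ i, ContinuousOn (g i) (closure D))
    (𝓗 : ℝ → ℝ) (h𝓗 : Continuous 𝓗) :
    ∀ᵐ ωel ∂P, ∀ φ : EuclideanSpace ℝ (Fin d) → ℝ,
      Measurable φ → (∃ Cφ : ℝ, ∀ x, |φ x| ≤ Cφ) →
      Filter.Tendsto
        (fun n => ∫ y in D,
          𝓗 (∑ i, g i y * ∫ x in D, f i x * ind n x ωel) * φ y * ind n y ωel)
        Filter.atTop
        (nhds (θ₀ * ∫ y in D,
          𝓗 (∑ i, g i y * (θ₀ * ∫ x in D, f i x)) * φ y)) := by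
  classical
  filter_upwards [hergodic] with ωel herg
  rintro φ hφm ⟨Cφ, hCφ⟩
  have hCφ0 : 0 ≤ Cφ := le_trans (abs_nonneg _) (hCφ 0)
  set K := closure D with hKdef
  have hKcl : IsClosed K := isClosed_closure
  have hKc : IsCompact K := hDb.isCompact_closure
  -- indicator extensions
  set F : Fin M → EuclideanSpace ℝ (Fin d) → ℝ := fun i => K.indicator (f i) with hFdef
  set G : Fin M → EuclideanSpace ℝ (Fin d) → ℝ := fun i => K.indicator (g i) with hGdef
  have hFm : ∀ i, Measurable (F i) := fun i => cont_on_indicator_measurable hKcl (hf i)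
  have hGm : ∀ i, Measurable (G i) := fun i => cont_on_indicator_measurable hKcl (hg i)
  have hFbd : ∀ i, ∃ C : ℝ, ∀ x, |F i x| ≤ C := by
    intro i
    obtain ⟨C, hC⟩ := hKc.exists_bound_of_continuousOn (hf i)
    exact ⟨max C 0, indicator_abs_le' (fun x hx => hC x hx) ⟩
  have hGbd : ∀ i, ∃ C : ℝ, 0 ≤ C ∧ ∀ x, |G i x| ≤ C := by
    intro i
    obtain ⟨C, hC⟩ := hKc.exists_bound_of_continuousOn (hg i)
    exact ⟨max C 0, le_max_right _ _, indicator_abs_le' (fun x hx => hC x hx)⟩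
  choose Cg hCg0 hCg using hGbd
  have hDsub : D ⊆ K := subset_closure
  have hindbd : ∀ n y, |ind n y ωel| ≤ 1 := by
    intro n y; rcases hind01 n y ωel with h | h <;> simp [h]
  -- inner integrals
  set An : ℕ → Fin M → ℝ := fun n i => ∫ x in D, F i x * ind n x ωel with hAndef
  set Ai : Fin M → ℝ := fun i => θ₀ * ∫ x in D, F i x with hAidef
  have hinner : ∀ n i, (∫ x in D, f i x * ind n x ωel) = An n i := by
    intro n i
    exact setIntegral_congr_fun hDm fun x hx => by
      simp [hFdef, Set.indicator_of_mem (hDsub hx)]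
  have hinner' : ∀ i, (∫ x in D, f i x) = ∫ x in D, F i x := by
    intro i
    exact setIntegral_congr_fun hDm fun x hx => by
      simp [hFdef, Set.indicator_of_mem (hDsub hx)]
  have hA : ∀ i, Filter.Tendsto (fun n => An n i) Filter.atTop (nhds (Ai i)) :=
    fun i => herg (F i) (hFm i) (hFbd i)
  -- the limiting integrand
  set hLimF : EuclideanSpace ℝ (Fin d) → ℝ := fun y => 𝓗 (∑ i, G i y * Ai i) * φ y with hinfdef
  have hsum_m : ∀ c : Fin M → ℝ, Measurable fun y => ∑ i, G i y * c i := by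
    intro c
    exact Finset.measurable_sum _ fun i _ => (hGm i).mul_const _
  have hinf_m : Measurable hLimF := (h𝓗.measurable.comp (hsum_m Ai)).mul hφm
  -- the uniform range bound
  set R : ℝ := ∑ i, Cg i * (|Ai i| + 1) with hRdef
  have hR0 : 0 ≤ R :=
    Finset.sum_nonneg fun i _ => mul_nonneg (hCg0 i) (by positivity)
  have harg : ∀ c : Fin M → ℝ, (∀ i, |c i - Ai i| ≤ 1) → ∀ y,
      (∑ i, G i y * c i) ∈ Set.Icc (-R) R := by
    intro c hc y
    rw [Set.mem_Icc, ← abs_le]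
    calc |∑ i, G i y * c i| ≤ ∑ i, |G i y * c i| := Finset.abs_sum_le_sum_abs _ _
      _ ≤ ∑ i, Cg i * (|Ai i| + 1) := by
          refine Finset.sum_le_sum fun i _ => ?_
          rw [abs_mul]
          refine mul_le_mul (hCg i y) ?_ (abs_nonneg _) (hCg0 i)
          have h1 := hc i
          have h2 := abs_sub_abs_le_abs_sub (c i) (Ai i)
          linarith
      _ = R := rfl
  obtain ⟨C𝓗, hC𝓗⟩ := (isCompact_Icc (a := -R) (b := R)).exists_bound_of_continuousOn
    h𝓗.continuousOn
  have hC𝓗0 : 0 ≤ C𝓗 := le_trans (norm_nonneg _) (hC𝓗 0 (by constructor <;> linarith))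
  have hargAi : ∀ y, (∑ i, G i y * Ai i) ∈ Set.Icc (-R) R :=
    harg Ai (fun i => by simp) 
  have hinf_bd : ∀ y, |hLimF y| ≤ C𝓗 * Cφ := by
    intro y
    rw [hinfdef]
    simp only [abs_mul]
    exact mul_le_mul (hC𝓗 _ (hargAi y)) (hCφ y) (abs_nonneg _) hC𝓗0
  have hU : Filter.Tendsto (fun n => ∫ y in D, hLimF y * ind n y ωel) Filter.atTop
      (nhds (θ₀ * ∫ y in D, hLimF y)) := herg hLimF hinf_m ⟨C𝓗 * Cφ, hinf_bd⟩
  -- identify the target limit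
  have hlim_eq : (θ₀ * ∫ y in D, 𝓗 (∑ i, g i y * (θ₀ * ∫ x in D, f i x)) * φ y)
      = θ₀ * ∫ y in D, hLimF y := by
    congr 1
    refine setIntegral_congr_fun hDm fun y hy => ?_
    simp only [hinfdef]
    congr 1
    congr 1
    refine Finset.sum_congr rfl fun i _ => ?_
    rw [hinner' i, hGdef]
    simp [Set.indicator_of_mem (hDsub hy), hAidef]
  -- identify the prelimit terms
  have hT_eq : ∀ n, (∫ y in D,
        𝓗 (∑ i, g i y * ∫ x in D, f i x * ind n x ωel) * φ y * ind n y ωel)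
      = ∫ y in D, 𝓗 (∑ i, G i y * An n i) * φ y * ind n y ωel := by
    intro n
    refine setIntegral_congr_fun hDm fun y hy => ?_
    have hs : (∑ i, g i y * ∫ x in D, f i x * ind n x ωel) = ∑ i, G i y * An n i := by
      refine Finset.sum_congr rfl fun i _ => ?_
      rw [hinner n i, hGdef]
      simp [Set.indicator_of_mem (hDsub hy)]
    rw [hs]
  rw [hlim_eq]
  have hmain : Filter.Tendsto
      (fun n => ∫ y in D, 𝓗 (∑ i, G i y * An n i) * φ y * ind n y ωel)
      Filter.atTop (nhds (θ₀ * ∫ y in D, hLimF y)) := by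
    have hDfin : volume D < ⊤ := hDb.measure_lt_top
    set mD : ℝ := (volume D).toReal with hmDdef
    have hmD0 : 0 ≤ mD := ENNReal.toReal_nonneg
    -- difference tends to zero
    have hdiff : Filter.Tendsto
        (fun n => (∫ y in D, 𝓗 (∑ i, G i y * An n i) * φ y * ind n y ωel)
          - ∫ y in D, hLimF y * ind n y ωel) Filter.atTop (nhds 0) := by
      rw [NormedAddCommGroup.tendsto_nhds_zero]
      intro ε hε
      set ε' : ℝ := ε / ((Cφ + 1) * (mD + 1)) with hε'def
      have hε'pos : 0 < ε' := by positivity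
      have hUC := (isCompact_Icc (a := -R) (b := R)).uniformContinuousOn_of_continuous
        h𝓗.continuousOn
      obtain ⟨δ, hδpos, hδ⟩ := Metric.uniformContinuousOn_iff.mp hUC ε' hε'pos
      set S : ℝ := ∑ i, Cg i with hSdef
      have hS0 : 0 ≤ S := Finset.sum_nonneg fun i _ => hCg0 i
      set r : ℝ := min 1 (δ / (S + 1)) with hrdef
      have hrpos : 0 < r := lt_min one_pos (by positivity)
      have hev : ∀ᶠ n in Filter.atTop, ∀ i, |An n i - Ai i| < r := by
        rw [Filter.eventually_all]
        intro i
        have := Metric.tendsto_nhds.mp (hA i) r hrpos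
        simpa [Real.dist_eq] using this
      filter_upwards [hev] with n hn
      have h1 : ∀ i, |An n i - Ai i| ≤ 1 :=
        fun i => le_trans (le_of_lt (hn i)) (min_le_left _ _)
      have hargn : ∀ y, (∑ i, G i y * An n i) ∈ Set.Icc (-R) R := harg _ h1
      have hclose : ∀ y, dist (∑ i, G i y * An n i) (∑ i, G i y * Ai i) < δ := by
        intro y
        rw [Real.dist_eq]
        have key : (∑ i, G i y * An n i) - (∑ i, G i y * Ai i)
            = ∑ i, G i y * (An n i - Ai i) := by
          rw [← Finset.sum_sub_distrib]
          exact Finset.sum_congr rfl fun i _ => by ring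
        rw [key]
        calc |∑ i, G i y * (An n i - Ai i)| ≤ ∑ i, |G i y * (An n i - Ai i)| :=
              Finset.abs_sum_le_sum_abs _ _
          _ ≤ ∑ i, Cg i * (δ / (S + 1)) := by
              refine Finset.sum_le_sum fun i _ => ?_
              rw [abs_mul]
              exact mul_le_mul (hCg i y)
                (le_trans (le_of_lt (hn i)) (min_le_right _ _)) (abs_nonneg _) (hCg0 i)
          _ = S * (δ / (S + 1)) := by rw [← Finset.sum_mul]
          _ < (S + 1) * (δ / (S + 1)) :=
              mul_lt_mul_of_pos_right (lt_add_one S) (by positivity)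
          _ = δ := mul_div_cancel₀ δ (by positivity)
      -- pointwise bound on the difference of integrands
      have hptw : ∀ y, ‖𝓗 (∑ i, G i y * An n i) * φ y * ind n y ωel
          - hLimF y * ind n y ωel‖ ≤ ε' * Cφ := by
        intro y
        have hfac : 𝓗 (∑ i, G i y * An n i) * φ y * ind n y ωel - hLimF y * ind n y ωel
            = (𝓗 (∑ i, G i y * An n i) - 𝓗 (∑ i, G i y * Ai i)) * (φ y * ind n y ωel) := by
          simp only [hinfdef]; ring
        rw [hfac, Real.norm_eq_abs, abs_mul, abs_mul]
        have hH : |𝓗 (∑ i, G i y * An n i) - 𝓗 (∑ i, G i y * Ai i)| ≤ ε' := by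
          have := hδ _ (hargn y) _ (hargAi y) (hclose y)
          rw [Real.dist_eq] at this
          exact le_of_lt this
        calc |𝓗 (∑ i, G i y * An n i) - 𝓗 (∑ i, G i y * Ai i)|
              * (|φ y| * |ind n y ωel|)
            ≤ ε' * (Cφ * 1) := by
              refine mul_le_mul hH ?_ (by positivity) (le_of_lt hε'pos)
              exact mul_le_mul (hCφ y) (hindbd n y) (abs_nonneg _) hCφ0
          _ = ε' * Cφ := by ring
      -- integrability of both integrands
      have hm1 : Measurable fun y => 𝓗 (∑ i, G i y * An n i) * φ y * ind n y ωel :=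
        ((h𝓗.measurable.comp (hsum_m (An n))).mul hφm).mul (hindm n ωel)
      have hm2 : Measurable fun y => hLimF y * ind n y ωel := hinf_m.mul (hindm n ωel)
      haveI : IsFiniteMeasure (volume.restrict D) :=
        ⟨by rwa [Measure.restrict_apply_univ]⟩
      have hint1 : Integrable (fun y => 𝓗 (∑ i, G i y * An n i) * φ y * ind n y ωel)
          (volume.restrict D) := by
        refine (integrable_const (C𝓗 * Cφ)).mono' hm1.aestronglyMeasurable ?_
        refine Filter.Eventually.of_forall fun y => ?_
        rw [Real.norm_eq_abs, abs_mul, abs_mul]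
        calc |𝓗 (∑ i, G i y * An n i)| * |φ y| * |ind n y ωel|
            ≤ C𝓗 * Cφ * 1 := by
              refine mul_le_mul ?_ (hindbd n y) (abs_nonneg _) (by positivity)
              exact mul_le_mul (hC𝓗 _ (hargn y)) (hCφ y) (abs_nonneg _) hC𝓗0
          _ = C𝓗 * Cφ := by ring
      have hint2 : Integrable (fun y => hLimF y * ind n y ωel) (volume.restrict D) := by
        refine (integrable_const (C𝓗 * Cφ)).mono' hm2.aestronglyMeasurable ?_
        refine Filter.Eventually.of_forall fun y => ?_
        rw [Real.norm_eq_abs, abs_mul]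
        calc |hLimF y| * |ind n y ωel| ≤ C𝓗 * Cφ * 1 :=
              mul_le_mul (hinf_bd y) (hindbd n y) (abs_nonneg _) (by positivity)
          _ = C𝓗 * Cφ := by ring
      rw [← integral_sub hint1 hint2]
      have hbound := norm_setIntegral_le_of_norm_le_const (μ := volume) (s := D)
        (C := ε' * Cφ) hDfin (fun y _ => hptw y)
      refine lt_of_le_of_lt (show _ ≤ ε' * Cφ * mD from hbound) ?_
      have hεeq : ε' * ((Cφ + 1) * (mD + 1)) = ε := by
        rw [hε'def]; field_simp
      nlinarith [hε'pos, hCφ0, hmD0]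
    have := hU.add hdiff
    rw [add_zero] at this
    refine this.congr fun n => ?_
    ring
  exact hmain.congr fun n => (hT_eq n).symm
end
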